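/- Let G be a group, σ, τ : G → G group endomorphisms, and D a quasi-inner (σ,τ)-derivation of ℂ[G]. Then there exists a function P : G → ℂ such that for all g, h ∈ G the coefficient D(g)(h) = P(h·τ(g)⁻¹) − P(σ(g)⁻¹·h). -/

import Mathlib

/-- Extension of a group endomorphism to a ℂ-algebra endomorphism of `ℂ[G]`. -/
noncomputable def algExt {G : Type*} [Group G] (σ : G →* G) :
    MonoidAlgebra ℂ G →ₐ[ℂ] MonoidAlgebra ℂ G :=
  MonoidAlgebra.mapDomainAlgHom ℂ ℂ σ

/-- a quasi-inner `(σ,τ)`-derivation `D` of `ℂ[G]` is a "generalized potential"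
derivation: there is `P : G → ℂ` with `D(g)(h) = P(h·τ(g)⁻¹) − P(σ(g)⁻¹·h)` for all `g h`. -/
theorem quasi_inner_derivation_potential
    {G : Type*} [Group G] (σ τ : G →* G)
    (D : MonoidAlgebra ℂ G →ₗ[ℂ] MonoidAlgebra ℂ G)
    (hD : ∀ a b : MonoidAlgebra ℂ G, D (a * b) = D a * algExt τ b + algExt σ a * D b)
    (hqi : ∀ g h : G, (σ g)⁻¹ * h = h * (τ g)⁻¹ → (D (MonoidAlgebra.of ℂ G g)).coeff h = 0) :
    ∃ P : G → ℂ, ∀ g h : G,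
      (D (MonoidAlgebra.of ℂ G g)).coeff h = P (h * (τ g)⁻¹) - P ((σ g)⁻¹ * h) := by
  classical
  let F : G → G → ℂ := fun g h => (D (MonoidAlgebra.of ℂ G g)).coeff h
  have halg : ∀ (ρ : G →* G) (g : G),
      algExt ρ (MonoidAlgebra.of ℂ G g) = MonoidAlgebra.of ℂ G (ρ g) := by
    intro ρ g
    simp [algExt, MonoidAlgebra.mapDomainAlgHom, MonoidAlgebra.of_apply]
  -- coefficient form of the derivation identity
  have Fmul : ∀ g₁ g₂ h : G,
      F (g₁ * g₂) h = F g₁ (h * (τ g₂)⁻¹) + F g₂ ((σ g₁)⁻¹ * h) := by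
    intro g₁ g₂ h
    have e := hD (MonoidAlgebra.of ℂ G g₁) (MonoidAlgebra.of ℂ G g₂)
    rw [← map_mul, halg, halg] at e
    have e2 : (D (MonoidAlgebra.of ℂ G (g₁ * g₂))).coeff h
        = (D (MonoidAlgebra.of ℂ G g₁) * MonoidAlgebra.of ℂ G (τ g₂)).coeff h
          + (MonoidAlgebra.of ℂ G (σ g₁) * D (MonoidAlgebra.of ℂ G g₂)).coeff h := by
      rw [e, MonoidAlgebra.coeff_add]; exact Finsupp.add_apply _ _ _
    simpa [F, MonoidAlgebra.of_apply] using e2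
  -- well-definedness on pairs
  have Fwd : ∀ g₁ h₁ g₂ h₂ : G,
      h₁ * (τ g₁)⁻¹ = h₂ * (τ g₂)⁻¹ → (σ g₁)⁻¹ * h₁ = (σ g₂)⁻¹ * h₂ →
      F g₁ h₁ = F g₂ h₂ := by
    intro g₁ h₁ g₂ h₂ hu hv
    have key := Fmul (g₁ * g₂⁻¹) g₂ h₁
    have hg : g₁ * g₂⁻¹ * g₂ = g₁ := by group
    rw [hg] at key
    have hzero : F (g₁ * g₂⁻¹) (h₁ * (τ g₂)⁻¹) = 0 := by
      apply hqi
      have h1 : (σ (g₁ * g₂⁻¹))⁻¹ * (h₁ * (τ g₂)⁻¹)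
          = σ g₂ * ((σ g₁)⁻¹ * h₁) * (τ g₂)⁻¹ := by
        simp [map_mul, map_inv, mul_assoc]
      have h2 : (h₁ * (τ g₂)⁻¹) * (τ (g₁ * g₂⁻¹))⁻¹
          = h₁ * (τ g₁)⁻¹ := by
        simp [map_mul, map_inv, mul_assoc]
      rw [h1, h2, hv, hu]
      group
    have hsec : (σ (g₁ * g₂⁻¹))⁻¹ * h₁ = h₂ := by
      have h3 : (σ (g₁ * g₂⁻¹))⁻¹ * h₁ = σ g₂ * ((σ g₁)⁻¹ * h₁) := by
        simp [map_mul, map_inv, mul_assoc]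
      rw [h3, hv]; group
    rw [hzero, hsec] at key
    simpa using key
  -- reachability relation
  let R : G → G → Prop :=
    fun u v => ∃ g h : G, u = h * (τ g)⁻¹ ∧ v = (σ g)⁻¹ * h
  have Rrefl : ∀ u, R u u := fun u => ⟨1, u, by simp, by simp⟩
  have Rsymm : ∀ {u v}, R u v → R v u := by
    rintro u v ⟨g, h, rfl, rfl⟩
    refine ⟨g⁻¹, (σ g)⁻¹ * h * (τ g)⁻¹, ?_, ?_⟩ <;>
      simp [map_inv, mul_assoc]
  have Rtrans : ∀ {u v w}, R u v → R v w → R u w := by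
    rintro u v w ⟨g₁, h₁, rfl, rfl⟩ ⟨g₂, h₂, hv, rfl⟩
    refine ⟨g₁ * g₂, h₁ * τ g₂, ?_, ?_⟩
    · simp [map_mul, map_inv, mul_assoc]
    · have h₂eq : ((σ g₁)⁻¹ * h₁) * τ g₂ = h₂ := eq_mul_inv_iff_mul_eq.mp hv
      rw [← h₂eq, map_mul, mul_inv_rev]; group
  let s : Setoid G := ⟨R, ⟨Rrefl, fun h => Rsymm h, fun h h' => Rtrans h h'⟩⟩
  let rep : G → G := fun u => (Quotient.mk s u).out
  have hrep : ∀ u, R u (rep u) := by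
    intro u
    exact Rsymm (Quotient.exact (Quotient.out_eq (Quotient.mk s u)))
  have hrepeq : ∀ {u v}, R u v → rep u = rep v := by
    intro u v huv
    show (Quotient.mk s u).out = (Quotient.mk s v).out
    rw [Quotient.sound (huv : s.r u v)]
  choose g0 h0 hu0 hr0 using hrep
  refine ⟨fun u => F (g0 u) (h0 u), ?_⟩
  intro g h
  have huv : R (h * (τ g)⁻¹) ((σ g)⁻¹ * h) := ⟨g, h, rfl, rfl⟩
  obtain ⟨a, ha⟩ : ∃ a, a = g0 ((σ g)⁻¹ * h) := ⟨_, rfl⟩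
  obtain ⟨b, hb⟩ : ∃ b, b = h0 ((σ g)⁻¹ * h) := ⟨_, rfl⟩
  have f1 : (σ g)⁻¹ * h = b * (τ a)⁻¹ := by rw [ha, hb]; exact hu0 _
  have hcomp : ((σ g)⁻¹ * h) * τ a = b := eq_mul_inv_iff_mul_eq.mp f1
  have key := Fmul g a (h * τ a)
  have e1 : h * τ a * (τ a)⁻¹ = h := by group
  have e2 : (σ g)⁻¹ * (h * τ a) = b := by rw [← mul_assoc]; exact hcomp
  rw [e1, e2] at key
  -- the chosen witness for u has the same pair as the composite
  have hPu : F (g0 (h * (τ g)⁻¹)) (h0 (h * (τ g)⁻¹)) = F (g * a) (h * τ a) := by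
    apply Fwd
    · rw [← hu0 (h * (τ g)⁻¹), map_mul]; group
    · rw [← hr0 (h * (τ g)⁻¹), hrepeq huv, hr0 ((σ g)⁻¹ * h), ← ha, ← hb,
        map_mul, mul_inv_rev, mul_assoc, e2]
  show F g h = F (g0 (h * (τ g)⁻¹)) (h0 (h * (τ g)⁻¹))
      - F (g0 ((σ g)⁻¹ * h)) (h0 ((σ g)⁻¹ * h))
  rw [hPu, key, ← ha, ← hb]
  ring
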